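/- Let d ≥ 1, q ≥ 1, ε' > 0, δ ∈ (0,1), ω ∈ (0,1), and let Θ ⊆ ℝ^d be a closed ℓq-ball of diameter R > 0. Set Δ = 2·d^{1−1/q}·R·(δ/(2ω))^{1/d}. Let x_apx be a random point of Θ with law μ (any probability measure on Θ); let x equal x_apx with probability 1−ω and otherwise equal an independent uniform sample from Θ; and let x_pure = x + Z where Z ∼ Laplace^⊗d(2Δ/ε') is independent of everything else. Then E‖x_pure − x_apx‖_q ≤ ω·R + (4·R·d·q/ε')·(δ/(2ω))^{1/d}; in particular, for q = 1 one obtains E‖x_pure − x_apx‖₁ ≤ ω·R + (4·R·d/ε')·(δ/(2ω))^{1/d}. -/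

import Mathlib

open MeasureTheory
open scoped ENNReal

noncomputable section

/-- The ℓq norm on ℝ^d. -/
def lqNorm {d : ℕ} (q : ℝ) (x : Fin d → ℝ) : ℝ := (∑ i, |x i| ^ q) ^ (1 / q)

/-- The closed ℓq-ball of radius `r` centered at `c` in ℝ^d. -/
def lqBall (d : ℕ) (q : ℝ) (c : Fin d → ℝ) (r : ℝ) : Set (Fin d → ℝ) :=
  {x | lqNorm q (x - c) ≤ r}

/-- The d-fold product of the Laplace(b) distribution on ℝ^d, given by its density. -/
def laplacePi (d : ℕ) (b : ℝ) : Measure (Fin d → ℝ) :=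
  volume.withDensity fun x => ENNReal.ofReal (∏ i, (1 / (2 * b)) * Real.exp (-|x i| / b))

/-- The uniform distribution (normalized Lebesgue measure) on a set Θ ⊆ ℝ^d. -/
def unifOn {d : ℕ} (Θ : Set (Fin d → ℝ)) : Measure (Fin d → ℝ) :=
  (volume Θ)⁻¹ • volume.restrict Θ

/-- The Bernoulli distribution on `Bool` putting mass `p` on `true` and `1-p` on `false`. -/
def bern (p : ℝ) : Measure Bool :=
  ENNReal.ofReal p • Measure.dirac true + ENNReal.ofReal (1 - p) • Measure.dirac false

section Aux
open Real Set

lemma sIoi_congr {b : ℝ} (hb : 0 < b) (q : ℝ) :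
    ∫ t in Set.Ioi (0:ℝ), t ^ q * Real.exp (-(t/b)) =
      ∫ t in Set.Ioi (0:ℝ), t ^ q * Real.exp (-(1/b * t)) := by
  refine setIntegral_congr_fun measurableSet_Ioi (fun t ht => ?_)
  rw [one_div, inv_mul_eq_div]

lemma intIoi_rpow_exp {b q : ℝ} (hb : 0 < b) (hq : 0 < q) :
    ∫ t in Set.Ioi (0:ℝ), t ^ q * Real.exp (-(t/b)) = b ^ (q+1) * Real.Gamma (q+1) := by
  have h := integral_rpow_mul_exp_neg_mul_Ioi (a := q+1) (r := 1/b) (by positivity) (by positivity)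
  rw [add_sub_cancel_right, one_div_one_div] at h
  rw [sIoi_congr hb, h]

lemma intIoi_exp {b : ℝ} (hb : 0 < b) :
    ∫ t in Set.Ioi (0:ℝ), Real.exp (-(t/b)) = b := by
  have h := integral_rpow_mul_exp_neg_mul_Ioi (a := 1) (r := 1/b) one_pos (by positivity)
  rw [sub_self, one_div_one_div, Real.Gamma_one, mul_one, Real.rpow_one] at h
  have h2 : ∫ t in Set.Ioi (0:ℝ), Real.exp (-(t/b)) =
      ∫ t in Set.Ioi (0:ℝ), t ^ (0:ℝ) * Real.exp (-(1/b * t)) := by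
    have := sIoi_congr hb 0
    simp only [Real.rpow_zero, one_mul] at this ⊢
    exact this
  rw [h2]
  simpa using h

lemma intOn_rpow_exp {b q : ℝ} (hb : 0 < b) (hq : 0 ≤ q) :
    IntegrableOn (fun t : ℝ => t ^ q * Real.exp (-(t/b))) (Set.Ioi 0) := by
  have h := integrableOn_rpow_mul_exp_neg_mul_rpow (s := q) (p := 1) (b := 1/b)
    (by linarith) one_pos (by positivity)
  refine h.congr_fun (fun t ht => ?_) measurableSet_Ioi
  dsimp only
  rw [Real.rpow_one, neg_mul, one_div, inv_mul_eq_div]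

lemma mul_exp_neg_le {s : ℝ} (hs : 0 ≤ s) : s * Real.exp (-s) ≤ Real.exp (-1) := by
  have h := Real.add_one_le_exp (s - 1)
  calc s * Real.exp (-s) ≤ Real.exp (s - 1) * Real.exp (-s) :=
        mul_le_mul_of_nonneg_right (by linarith) (Real.exp_nonneg _)
    _ = Real.exp (-1) := by rw [← Real.exp_add]; ring_nf

lemma Gamma_add_one_le {q : ℝ} (hq : 1 ≤ q) : Real.Gamma (q + 1) ≤ q ^ q := by
  have hq0 : 0 < q := by linarith
  have key : ∀ t ∈ Set.Ioi (0:ℝ), t ^ q * Real.exp (-(t/1)) ≤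
      q ^ (q-1) * Real.exp (1-q) * (t ^ (1:ℝ) * Real.exp (-(t/q))) := by
    intro t ht
    have ht0 : (0:ℝ) < t := ht
    have hbase : (0:ℝ) < t / q * Real.exp (-(t/q)) := by positivity
    have h1 : t / q * Real.exp (-(t/q)) ≤ Real.exp (-1) := mul_exp_neg_le (by positivity)
    have h2 : (t / q * Real.exp (-(t/q))) ^ q ≤
        Real.exp (-1) ^ (q-1) * (t / q * Real.exp (-(t/q))) := by
      calc (t / q * Real.exp (-(t/q))) ^ q
          = (t / q * Real.exp (-(t/q))) ^ (q-1) * (t / q * Real.exp (-(t/q))) := by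
            rw [← Real.rpow_add_one (ne_of_gt hbase), sub_add_cancel]
        _ ≤ Real.exp (-1) ^ (q-1) * (t / q * Real.exp (-(t/q))) := by
            apply mul_le_mul_of_nonneg_right _ hbase.le
            exact Real.rpow_le_rpow hbase.le h1 (by linarith)
    have hexp : (t / q * Real.exp (-(t/q))) ^ q = t ^ q * Real.exp (-(t/1)) / q ^ q := by
      rw [Real.mul_rpow (by positivity) (Real.exp_nonneg _), Real.div_rpow ht0.le hq0.le,
        ← Real.exp_mul, div_one]
      have h3 : -(t/q) * q = -t := by field_simp
      rw [h3]
      ring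
    have hq2 : q ^ (q-1) = q ^ q / q := by
      rw [Real.rpow_sub hq0, Real.rpow_one]
    have hexp2 : Real.exp (-1) ^ (q-1) = Real.exp (1-q) := by
      rw [← Real.exp_mul]; ring_nf
    rw [hexp] at h2
    have h4 := mul_le_mul_of_nonneg_right h2 (le_of_lt (Real.rpow_pos_of_pos hq0 q))
    rw [div_mul_cancel₀ _ (ne_of_gt (Real.rpow_pos_of_pos hq0 q))] at h4
    calc t ^ q * Real.exp (-(t/1)) ≤
        Real.exp (-1) ^ (q-1) * (t / q * Real.exp (-(t/q))) * q ^ q := h4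
      _ = q ^ (q-1) * Real.exp (1-q) * (t ^ (1:ℝ) * Real.exp (-(t/q))) := by
          rw [hexp2, hq2, Real.rpow_one]
          field_simp
  have hmono : ∫ t in Set.Ioi (0:ℝ), t ^ q * Real.exp (-(t/1)) ≤
      ∫ t in Set.Ioi (0:ℝ), q ^ (q-1) * Real.exp (1-q) * (t ^ (1:ℝ) * Real.exp (-(t/q))) := by
    refine setIntegral_mono_on (intOn_rpow_exp one_pos (by linarith))
      ((intOn_rpow_exp hq0 zero_le_one).const_mul _) measurableSet_Ioi key
  rw [intIoi_rpow_exp one_pos hq0, Real.one_rpow, one_mul, integral_const_mul,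
    intIoi_rpow_exp hq0 one_pos] at hmono
  rw [show Real.Gamma (1+1) = 1 by norm_num [Real.Gamma_two], mul_one] at hmono
  have hpow : q ^ (q-1) * q ^ ((1:ℝ)+1) = q ^ q * q := by
    rw [← Real.rpow_add hq0, ← Real.rpow_add_one hq0.ne' q, show q-1+(1+1) = q+1 by ring]
  have heq : q ^ (q-1) * Real.exp (1-q) * q ^ ((1:ℝ)+1) = q ^ q * (q * Real.exp (1-q)) := by
    have h5 : q ^ (q-1) * Real.exp (1-q) * q ^ ((1:ℝ)+1)
        = (q ^ (q-1) * q ^ ((1:ℝ)+1)) * Real.exp (1-q) := by ring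
    rw [h5, hpow]; ring
  have hle : q * Real.exp (1-q) ≤ 1 := by
    have h := Real.add_one_le_exp (q-1)
    calc q * Real.exp (1-q) ≤ Real.exp (q-1) * Real.exp (1-q) :=
          mul_le_mul_of_nonneg_right (by linarith) (Real.exp_nonneg _)
      _ = 1 := by rw [← Real.exp_add, show (q-1)+(1-q) = 0 by ring, Real.exp_zero]
  calc Real.Gamma (q+1) ≤ q ^ (q-1) * Real.exp (1-q) * q ^ ((1:ℝ)+1) := hmono
    _ = q ^ q * (q * Real.exp (1-q)) := heq
    _ ≤ q ^ q * 1 := mul_le_mul_of_nonneg_left hle (Real.rpow_pos_of_pos hq0 q).le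
    _ = q ^ q := mul_one _


lemma integrable_comp_abs' {g : ℝ → ℝ} (hg : IntegrableOn g (Set.Ioi 0)) :
    Integrable (fun t : ℝ => g |t|) := by
  have hIoi : IntegrableOn (fun t : ℝ => g |t|) (Set.Ioi 0) :=
    hg.congr_fun (fun x hx => by rw [abs_of_pos hx]) measurableSet_Ioi
  have hIic : IntegrableOn (fun t : ℝ => g |t|) (Set.Iic 0) := by
    rw [← Measure.map_neg_eq_self (volume : Measure ℝ)]
    have m : MeasurableEmbedding fun x : ℝ => -x := (Homeomorph.neg ℝ).measurableEmbedding
    rw [m.integrableOn_map_iff]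
    simp_rw [Function.comp_def, abs_neg, neg_preimage, neg_Iic, neg_zero]
    exact Iff.mpr integrableOn_Ici_iff_integrableOn_Ioi hIoi
  have h := hIic.union hIoi
  rwa [Set.Iic_union_Ioi, integrableOn_univ] at h

lemma lapPdf_integrable {b : ℝ} (hb : 0 < b) :
    Integrable (fun t : ℝ => 1/(2*b) * Real.exp (-|t|/b)) := by
  have h0 : IntegrableOn (fun x : ℝ => 1/(2*b) * Real.exp (-(x/b))) (Set.Ioi 0) := by
    have h := (intOn_rpow_exp (q := 0) hb le_rfl).const_mul (1/(2*b))
    exact IntegrableOn.congr_fun h (fun t ht => by simp [Real.rpow_zero]) measurableSet_Ioi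
  have h := integrable_comp_abs' h0
  refine h.congr (Filter.Eventually.of_forall fun t => ?_)
  simp only [neg_div]

lemma lapPdf_moment_integrable {b q : ℝ} (hb : 0 < b) (hq : 0 ≤ q) :
    Integrable (fun t : ℝ => |t| ^ q * (1/(2*b) * Real.exp (-|t|/b))) := by
  have h0 : IntegrableOn (fun x : ℝ => x ^ q * (1/(2*b) * Real.exp (-(x/b)))) (Set.Ioi 0) := by
    have h := (intOn_rpow_exp (q := q) hb hq).const_mul (1/(2*b))
    exact IntegrableOn.congr_fun h (fun t ht => by ring) measurableSet_Ioi
  have h := integrable_comp_abs' h0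
  refine h.congr (Filter.Eventually.of_forall fun t => ?_)
  simp only [neg_div]

lemma lapPdf_integral {b : ℝ} (hb : 0 < b) :
    ∫ t : ℝ, 1/(2*b) * Real.exp (-|t|/b) = 1 := by
  have h : ∫ t : ℝ, 1/(2*b) * Real.exp (-|t|/b)
      = ∫ t : ℝ, (fun x : ℝ => 1/(2*b) * Real.exp (-(x/b))) |t| := by
    congr 1; funext t; rw [neg_div]
  rw [h, integral_comp_abs (f := fun x : ℝ => 1/(2*b) * Real.exp (-(x/b)))]
  rw [integral_const_mul, intIoi_exp hb]
  field_simp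

lemma lapPdf_moment {b q : ℝ} (hb : 0 < b) (hq : 1 ≤ q) :
    ∫ t : ℝ, |t| ^ q * (1/(2*b) * Real.exp (-|t|/b)) ≤ (b * q) ^ q := by
  have hq0 : 0 < q := by linarith
  have h : ∫ t : ℝ, |t| ^ q * (1/(2*b) * Real.exp (-|t|/b))
      = ∫ t : ℝ, (fun x : ℝ => 1/(2*b) * (x ^ q * Real.exp (-(x/b)))) |t| := by
    congr 1; funext t; rw [neg_div]; ring
  rw [h, integral_comp_abs (f := fun x : ℝ => 1/(2*b) * (x ^ q * Real.exp (-(x/b))))]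
  rw [integral_const_mul, intIoi_rpow_exp hb hq0]
  have hval : 2 * (1/(2*b) * (b ^ (q+1) * Real.Gamma (q+1))) = b ^ q * Real.Gamma (q+1) := by
    rw [Real.rpow_add_one hb.ne' q]
    field_simp
  rw [hval, Real.mul_rpow hb.le hq0.le]
  exact mul_le_mul_of_nonneg_left (Gamma_add_one_le hq) (Real.rpow_nonneg hb.le q)


variable {d : ℕ} {q : ℝ}

lemma lqNorm_nonneg (x : Fin d → ℝ) : 0 ≤ lqNorm q x :=
  Real.rpow_nonneg (Finset.sum_nonneg fun i _ => Real.rpow_nonneg (abs_nonneg _) q) _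

lemma continuous_lqNorm (hq : 0 < q) : Continuous (lqNorm (d := d) q) := by
  apply Continuous.rpow_const
  · exact continuous_finset_sum _ fun i _ =>
      ((continuous_abs.comp (continuous_apply i)).rpow_const fun x => Or.inr hq.le)
  · exact fun x => Or.inr (by positivity)

lemma lqNorm_zero (hq : 0 < q) : lqNorm q (0 : Fin d → ℝ) = 0 := by
  simp [lqNorm, Real.zero_rpow hq.ne', Real.zero_rpow (inv_ne_zero hq.ne')]

lemma lqNorm_neg (x : Fin d → ℝ) : lqNorm q (-x) = lqNorm q x := by
  simp [lqNorm]

lemma lqNorm_add_le (hq : 1 ≤ q) (x y : Fin d → ℝ) :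
    lqNorm q (x + y) ≤ lqNorm q x + lqNorm q y := by
  have h := Real.Lp_add_le Finset.univ x y hq
  simpa [lqNorm] using h

lemma lqNorm_sub_le_of_mem {c : Fin d → ℝ} {r : ℝ} (hq : 1 ≤ q) {a u : Fin d → ℝ}
    (ha : a ∈ lqBall d q c r) (hu : u ∈ lqBall d q c r) : lqNorm q (u - a) ≤ 2 * r := by
  have h : u - a = (u - c) + -(a - c) := by abel
  rw [h]
  calc lqNorm q ((u - c) + -(a - c)) ≤ lqNorm q (u - c) + lqNorm q (-(a - c)) :=
        lqNorm_add_le hq _ _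
    _ = lqNorm q (u - c) + lqNorm q (a - c) := by rw [lqNorm_neg]
    _ ≤ r + r := add_le_add hu ha
    _ = 2 * r := by ring

lemma measurableSet_lqBall (hq : 0 < q) (c : Fin d → ℝ) (r : ℝ) :
    MeasurableSet (lqBall d q c r) := by
  have : lqBall d q c r = (fun x => lqNorm q (x - c)) ⁻¹' Set.Iic r := rfl
  rw [this]
  exact (((continuous_lqNorm hq).comp (continuous_id.sub continuous_const)).measurable)
    measurableSet_Iic

lemma volume_lqBall (hd : 0 < d) (hq : 1 ≤ q) (c : Fin d → ℝ) (r : ℝ) :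
    volume (lqBall d q c r) = (ENNReal.ofReal r) ^ d *
      ENNReal.ofReal ((2 * Real.Gamma (1/q + 1)) ^ d / Real.Gamma (d/q + 1)) := by
  have : Nonempty (Fin d) := ⟨⟨0, hd⟩⟩
  have htrans : lqBall d q c r = (fun x => x + (-c)) ⁻¹' (lqBall d q 0 r) := by
    ext x
    simp [lqBall, lqNorm, sub_eq_add_neg]
  rw [htrans, measure_preimage_add_right]
  have hball : lqBall d q 0 r = {x : Fin d → ℝ | (∑ i, |x i| ^ q) ^ (1/q) ≤ r} := by
    ext x; simp [lqBall, lqNorm]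
  rw [hball, MeasureTheory.volume_sum_rpow_le _ hq r, Fintype.card_fin]

lemma volume_lqBall_pos (hd : 0 < d) (hq : 1 ≤ q) (c : Fin d → ℝ) {r : ℝ} (hr : 0 < r) :
    0 < volume (lqBall d q c r) ∧ volume (lqBall d q c r) < ⊤ := by
  have hq0 : 0 < q := by linarith
  have hΓ1 : 0 < Real.Gamma (1/q + 1) := Real.Gamma_pos_of_pos (by positivity)
  have hΓ2 : 0 < Real.Gamma (d/q + 1) := Real.Gamma_pos_of_pos (by positivity)
  rw [volume_lqBall hd hq c r]
  constructor
  · exact ENNReal.mul_pos (pow_ne_zero d (ENNReal.ofReal_pos.mpr hr).ne')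
      (ENNReal.ofReal_pos.mpr (by positivity : (0:ℝ) < (2 * Real.Gamma (1/q + 1)) ^ d / Real.Gamma (d/q + 1))).ne'
  · exact ENNReal.mul_lt_top (ENNReal.pow_lt_top ENNReal.ofReal_lt_top) ENNReal.ofReal_lt_top


variable {b : ℝ}

lemma lapPdf_cont {b : ℝ} : Continuous (fun t : ℝ => 1/(2*b) * Real.exp (-|t|/b)) := by
  fun_prop

lemma lapDens_meas (d : ℕ) (b : ℝ) :
    Measurable (fun x : Fin d → ℝ => ENNReal.ofReal (∏ i, 1/(2*b) * Real.exp (-|x i|/b))) := by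
  apply ENNReal.measurable_ofReal.comp
  apply Finset.measurable_prod
  intro i _
  exact lapPdf_cont.measurable.comp (measurable_pi_apply i)

lemma bern_prob {p : ℝ} (hp0 : 0 ≤ p) (hp1 : p ≤ 1) : IsProbabilityMeasure (bern p) := by
  constructor
  simp only [bern, Measure.add_apply, Measure.smul_apply, Measure.dirac_apply' _ MeasurableSet.univ,
    smul_eq_mul]
  rw [Set.indicator_of_mem (Set.mem_univ _), Set.indicator_of_mem (Set.mem_univ _)]
  simp only [Pi.one_apply, mul_one]
  rw [← ENNReal.ofReal_add hp0 (by linarith), add_sub_cancel, ENNReal.ofReal_one]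

lemma unifOn_prob {Θ : Set (Fin d → ℝ)} (h0 : volume Θ ≠ 0) (ht : volume Θ ≠ ⊤) :
    IsProbabilityMeasure (unifOn Θ) := by
  constructor
  rw [unifOn, Measure.smul_apply, Measure.restrict_apply MeasurableSet.univ, Set.univ_inter,
    smul_eq_mul, ENNReal.inv_mul_cancel h0 ht]

lemma laplacePi_lintegral_ofReal {f : (Fin d → ℝ) → ℝ} (hf : Measurable f) (hf0 : 0 ≤ f)
    (hb : 0 < b)
    (hfi : Integrable (fun x : Fin d → ℝ => f x * ∏ i, 1/(2*b) * Real.exp (-|x i|/b))) :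
    ∫⁻ x, ENNReal.ofReal (f x) ∂(laplacePi d b) =
      ENNReal.ofReal (∫ x : Fin d → ℝ, f x * ∏ i, 1/(2*b) * Real.exp (-|x i|/b)) := by
  rw [laplacePi, lintegral_withDensity_eq_lintegral_mul _ (lapDens_meas d b) hf.ennreal_ofReal]
  have hpt : ∀ a : Fin d → ℝ,
      ((fun x : Fin d → ℝ => ENNReal.ofReal (∏ i, 1/(2*b) * Real.exp (-|x i|/b))) *
        fun x : Fin d → ℝ => ENNReal.ofReal (f x)) a
      = ENNReal.ofReal (f a * ∏ i, 1/(2*b) * Real.exp (-|a i|/b)) := by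
    intro a
    simp only [Pi.mul_apply]
    rw [← ENNReal.ofReal_mul (Finset.prod_nonneg fun i _ => by positivity), mul_comm]
  rw [lintegral_congr hpt]
  exact (MeasureTheory.ofReal_integral_eq_lintegral_ofReal hfi
    (Filter.Eventually.of_forall fun x => mul_nonneg (hf0 x)
      (Finset.prod_nonneg fun i _ => by positivity))).symm

lemma laplacePi_prob (hb : 0 < b) : IsProbabilityMeasure (laplacePi d b) := by
  constructor
  have hfi : Integrable (fun x : Fin d → ℝ =>
      (fun _ : Fin d → ℝ => (1:ℝ)) x * ∏ i, 1/(2*b) * Real.exp (-|x i|/b)) := by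
    refine (Integrable.fintype_prod
      (f := fun _ : Fin d => fun t : ℝ => 1/(2*b) * Real.exp (-|t|/b))
      (fun _ => lapPdf_integrable hb)).congr (Filter.Eventually.of_forall fun x => ?_)
    simp
  have h := laplacePi_lintegral_ofReal (f := fun _ => (1:ℝ)) measurable_const
    (fun _ => zero_le_one) hb hfi
  simp only [one_mul] at h
  rw [← lintegral_one, show (1:ℝ≥0∞) = ENNReal.ofReal (1:ℝ) by simp]
  rw [h, integral_fintype_prod_volume_eq_pow (ι := Fin d) (fun t : ℝ => 1/(2*b) * Real.exp (-|t|/b)),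
    lapPdf_integral hb, one_pow, ENNReal.ofReal_one]

lemma laplacePi_coord_moment (hb : 0 < b) (hq : 1 ≤ q) (i : Fin d) :
    ∫⁻ z, ENNReal.ofReal (|z i| ^ q) ∂(laplacePi d b) ≤ ENNReal.ofReal ((b*q)^q) := by
  have hq0 : (0:ℝ) ≤ q := by linarith
  set F : Fin d → ℝ → ℝ :=
    fun j t => (if j = i then |t| ^ q else 1) * (1/(2*b) * Real.exp (-|t|/b)) with hF
  have hFi : F i = fun t => |t| ^ q * (1/(2*b) * Real.exp (-|t|/b)) := by
    funext t; simp [hF]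
  have hFj : ∀ j, j ≠ i → F j = fun t => 1/(2*b) * Real.exp (-|t|/b) := by
    intro j hj; funext t; simp [hF, hj]
  have hFint : ∀ j, Integrable (F j) := by
    intro j
    by_cases hji : j = i
    · subst hji
      rw [hFi]
      exact lapPdf_moment_integrable hb hq0
    · rw [hFj j hji]
      exact lapPdf_integrable hb
  have hprod : ∀ z : Fin d → ℝ,
      ∏ j, F j (z j) = |z i| ^ q * ∏ j, 1/(2*b) * Real.exp (-|z j|/b) := by
    intro z
    calc ∏ j, F j (z j)
        = ∏ j, (if j = i then |z j| ^ q else 1) * (1/(2*b) * Real.exp (-|z j|/b)) :=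
          Finset.prod_congr rfl fun j _ => by simp [hF]
      _ = (∏ j, if j = i then |z j| ^ q else 1) * ∏ j, (1/(2*b) * Real.exp (-|z j|/b)) :=
          Finset.prod_mul_distrib
      _ = |z i| ^ q * ∏ j, (1/(2*b) * Real.exp (-|z j|/b)) := by
          rw [Finset.prod_ite_eq' Finset.univ i (fun j => |z j| ^ q),
            if_pos (Finset.mem_univ i)]
  have hfmeas : Measurable fun z : Fin d → ℝ => |z i| ^ q :=
    (((continuous_abs.rpow_const fun _ => Or.inr hq0)).comp (continuous_apply i)).measurable
  have hfi : Integrable (fun x : Fin d → ℝ => |x i| ^ q * ∏ j, 1/(2*b) * Real.exp (-|x j|/b)) := by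
    have := Integrable.fintype_prod (f := F) hFint
    exact this.congr (Filter.Eventually.of_forall fun z => hprod z)
  have h := laplacePi_lintegral_ofReal (f := fun z => |z i| ^ q) hfmeas
    (fun z => Real.rpow_nonneg (abs_nonneg _) q) hb hfi
  rw [h]
  apply ENNReal.ofReal_le_ofReal
  have hval : ∫ x : Fin d → ℝ, |x i| ^ q * ∏ j, 1/(2*b) * Real.exp (-|x j|/b)
      = ∫ t : ℝ, |t| ^ q * (1/(2*b) * Real.exp (-|t|/b)) := by
    rw [integral_congr_ae (Filter.Eventually.of_forall fun z => (hprod z).symm),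
      integral_fintype_prod_volume_eq_prod (ι := Fin d) F]
    have hc : ∀ j, ∫ t : ℝ, F j t =
        if j = i then ∫ t : ℝ, |t| ^ q * (1/(2*b) * Real.exp (-|t|/b)) else 1 := by
      intro j
      by_cases hji : j = i
      · subst hji; rw [if_pos rfl, hFi]
      · rw [if_neg hji, hFj j hji, lapPdf_integral hb]
    rw [Finset.prod_congr rfl (fun j _ => hc j), Finset.prod_ite_eq' Finset.univ i,
      if_pos (Finset.mem_univ i)]
  rw [hval]
  exact lapPdf_moment hb hq

lemma lintegral_le_rpow {α : Type*} [MeasurableSpace α] (μ : Measure α) [IsProbabilityMeasure μ]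
    {f : α → ℝ≥0∞} (hf : AEMeasurable f μ) (hq : 1 ≤ q) :
    ∫⁻ a, f a ∂μ ≤ (∫⁻ a, f a ^ q ∂μ) ^ (1/q) := by
  rcases eq_or_lt_of_le hq with h1 | h1
  · rw [← h1]
    simp
  · have hpq := Real.HolderConjugate.conjExponent h1
    have h := ENNReal.lintegral_mul_le_Lp_mul_Lq μ hpq hf
      (aemeasurable_const (b := (1:ℝ≥0∞)))
    simpa using h

lemma laplacePi_norm_bound (hb : 0 < b) (hq : 1 ≤ q) :
    ∫⁻ z, ENNReal.ofReal (lqNorm q z) ∂(laplacePi d b) ≤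
      ENNReal.ofReal ((d:ℝ) ^ (1/q) * (b*q)) := by
  have hq0 : (0:ℝ) < q := by linarith
  haveI := laplacePi_prob (d := d) hb
  have hmeas : Measurable fun z : Fin d → ℝ => ENNReal.ofReal (lqNorm q z) := by
    apply Measurable.ennreal_ofReal
    exact (continuous_lqNorm hq0).measurable
  have hpow : ∀ z : Fin d → ℝ, (ENNReal.ofReal (lqNorm q z)) ^ q
      = ENNReal.ofReal (∑ i, |z i| ^ q) := by
    intro z
    rw [ENNReal.ofReal_rpow_of_nonneg (lqNorm_nonneg z) hq0.le, lqNorm,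
      ← Real.rpow_mul (Finset.sum_nonneg fun i _ => Real.rpow_nonneg (abs_nonneg _) q),
      one_div_mul_cancel hq0.ne', Real.rpow_one]
  have hsum : ∫⁻ z, (ENNReal.ofReal (lqNorm q z)) ^ q ∂(laplacePi d b)
      ≤ (d : ℝ≥0∞) * ENNReal.ofReal ((b*q)^q) := by
    rw [lintegral_congr fun z => hpow z]
    have hsplit : ∀ z : Fin d → ℝ, ENNReal.ofReal (∑ i, |z i| ^ q)
        = ∑ i, ENNReal.ofReal (|z i| ^ q) :=
      fun z => ENNReal.ofReal_sum_of_nonneg fun i _ => Real.rpow_nonneg (abs_nonneg _) q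
    rw [lintegral_congr hsplit, lintegral_finset_sum]
    · calc ∑ i, ∫⁻ z, ENNReal.ofReal (|z i| ^ q) ∂(laplacePi d b)
          ≤ ∑ _i : Fin d, ENNReal.ofReal ((b*q)^q) :=
            Finset.sum_le_sum fun i _ => laplacePi_coord_moment hb hq i
        _ = (d : ℝ≥0∞) * ENNReal.ofReal ((b*q)^q) := by
            rw [Finset.sum_const, Finset.card_univ, Fintype.card_fin, nsmul_eq_mul]
    · intro i _
      apply Measurable.ennreal_ofReal
      exact (((continuous_abs.rpow_const fun _ => Or.inr hq0.le)).comp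
        (continuous_apply i)).measurable
  calc ∫⁻ z, ENNReal.ofReal (lqNorm q z) ∂(laplacePi d b)
      ≤ (∫⁻ z, (ENNReal.ofReal (lqNorm q z)) ^ q ∂(laplacePi d b)) ^ (1/q) :=
        lintegral_le_rpow _ hmeas.aemeasurable hq
    _ ≤ ((d : ℝ≥0∞) * ENNReal.ofReal ((b*q)^q)) ^ (1/q) :=
        ENNReal.rpow_le_rpow hsum (by positivity)
    _ = ENNReal.ofReal ((d:ℝ) ^ (1/q) * (b*q)) := by
        rw [← ENNReal.ofReal_natCast d, ← ENNReal.ofReal_mul (by positivity),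
          ENNReal.ofReal_rpow_of_nonneg (by positivity) (by positivity)]
        congr 1
        rw [Real.mul_rpow (by positivity) (by positivity),
          ← Real.rpow_mul (by positivity : (0:ℝ) ≤ b*q), mul_one_div_cancel hq0.ne',
          Real.rpow_one]


lemma lint_snd {α β : Type*} [MeasurableSpace α] [MeasurableSpace β]
    (μ : Measure α) (ν : Measure β) [IsProbabilityMeasure μ] [SFinite ν]
    {h : β → ℝ≥0∞} (hh : Measurable h) :
    ∫⁻ p : α × β, h p.2 ∂(μ.prod ν) = ∫⁻ y, h y ∂ν := by
  rw [MeasureTheory.lintegral_prod (fun z => h z.2) ((hh.comp measurable_snd).aemeasurable)]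
  simp

lemma lint_fst {α β : Type*} [MeasurableSpace α] [MeasurableSpace β]
    (μ : Measure α) (ν : Measure β) [SFinite ν] [IsProbabilityMeasure ν]
    {h : α → ℝ≥0∞} (hh : Measurable h) :
    ∫⁻ p : α × β, h p.1 ∂(μ.prod ν) = ∫⁻ x, h x ∂μ := by
  rw [MeasureTheory.lintegral_prod (fun z => h z.1) ((hh.comp measurable_fst).aemeasurable)]
  simp

lemma lint_bern (p : ℝ) (h : Bool → ℝ≥0∞) :
    ∫⁻ x, h x ∂(bern p) = ENNReal.ofReal p * h true + ENNReal.ofReal (1-p) * h false := by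
  rw [bern, lintegral_add_measure, lintegral_smul_measure, lintegral_smul_measure,
    lintegral_dirac, lintegral_dirac, smul_eq_mul, smul_eq_mul]


/-- **Purification (utility guarantee, Theorem 1 of the paper).**
On the canonical product probability space carrying an independent quadruple
`(x_apx, coin, u, Z)` with `x_apx ∼ μ` (a probability measure on the ℓq-ball `Θ` of
diameter `R`), `coin` Bernoulli(1-ω), `u ∼ Unif(Θ)`, `Z ∼ Laplace^⊗d(2Δ/ε')`, letting
`x = x_apx` if the coin is heads and `x = u` otherwise and `x_pure = x + Z`, we have
`E‖x_pure - x_apx‖_q ≤ ω R + (4 R d q/ε') (δ/(2ω))^{1/d}`. -/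
theorem purification_utility
    (d : ℕ) (hd : 1 ≤ d) (q : ℝ) (hq : 1 ≤ q)
    (ε' δ ω R : ℝ) (hε' : 0 < ε')
    (hδ : δ ∈ Set.Ioo (0 : ℝ) 1) (hω : ω ∈ Set.Ioo (0 : ℝ) 1) (hR : 0 < R)
    (c : Fin d → ℝ) (Θ : Set (Fin d → ℝ)) (hΘ : Θ = lqBall d q c (R / 2))
    (μ : Measure (Fin d → ℝ)) (hμ : IsProbabilityMeasure μ) (hμsupp : μ Θᶜ = 0)
    (Δ : ℝ) (hΔ : Δ = 2 * (d : ℝ) ^ (1 - 1 / q) * R * (δ / (2 * ω)) ^ (1 / (d : ℝ))) :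
    ∫ p : (Fin d → ℝ) × (Bool × ((Fin d → ℝ) × (Fin d → ℝ))),
        lqNorm q (((if p.2.1 then p.1 else p.2.2.1) + p.2.2.2) - p.1)
      ∂(μ.prod ((bern (1 - ω)).prod ((unifOn Θ).prod (laplacePi d (2 * Δ / ε')))))
      ≤ ω * R + (4 * R * (d : ℝ) * q / ε') * (δ / (2 * ω)) ^ (1 / (d : ℝ)) := by
  obtain ⟨hδ0, hδ1⟩ := hδ
  obtain ⟨hω0, hω1⟩ := hω
  have hd0 : 0 < d := hd
  have hdR : (0:ℝ) < d := by exact_mod_cast hd0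
  have hq0 : 0 < q := by linarith
  set t : ℝ := (δ / (2 * ω)) ^ (1 / (d : ℝ)) with ht
  have ht0 : 0 < t := Real.rpow_pos_of_pos (by positivity) _
  have hΔ0 : 0 < Δ := by
    rw [hΔ]
    have : (0:ℝ) < (d : ℝ) ^ (1 - 1/q) := Real.rpow_pos_of_pos hdR _
    positivity
  set b : ℝ := 2 * Δ / ε' with hb
  have hb0 : 0 < b := by positivity
  -- probability instances
  haveI := hμ
  haveI hBern : IsProbabilityMeasure (bern (1 - ω)) := bern_prob (by linarith) (by linarith)
  have hvol := volume_lqBall_pos hd0 hq c (show (0:ℝ) < R/2 by linarith)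
  have hΘmeas : MeasurableSet Θ := hΘ ▸ measurableSet_lqBall hq0 c (R/2)
  have hvolΘ0 : volume Θ ≠ 0 := by rw [hΘ]; exact hvol.1.ne'
  have hvolΘt : volume Θ ≠ ⊤ := by rw [hΘ]; exact hvol.2.ne
  haveI hUnif : IsProbabilityMeasure (unifOn Θ) := unifOn_prob hvolΘ0 hvolΘt
  haveI hLap : IsProbabilityMeasure (laplacePi d b) := laplacePi_prob hb0
  -- measurability
  have hselset : MeasurableSet {p : (Fin d → ℝ) × (Bool × ((Fin d → ℝ) × (Fin d → ℝ))) |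
      p.2.1 = true} :=
    (measurable_fst.comp measurable_snd) (measurableSet_singleton true)
  have hsel : Measurable fun p : (Fin d → ℝ) × (Bool × ((Fin d → ℝ) × (Fin d → ℝ))) =>
      (if p.2.1 then p.1 else p.2.2.1) :=
    Measurable.ite hselset measurable_fst
      (measurable_fst.comp (measurable_snd.comp measurable_snd))
  have hz : Measurable fun p : (Fin d → ℝ) × (Bool × ((Fin d → ℝ) × (Fin d → ℝ))) =>
      p.2.2.2 := measurable_snd.comp (measurable_snd.comp measurable_snd)
  have hFmeas : Measurable fun p : (Fin d → ℝ) × (Bool × ((Fin d → ℝ) × (Fin d → ℝ))) =>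
      lqNorm q (((if p.2.1 then p.1 else p.2.2.1) + p.2.2.2) - p.1) :=
    (continuous_lqNorm hq0).measurable.comp ((hsel.add hz).sub measurable_fst)
  have hGmeas : Measurable fun p : (Fin d → ℝ) × (Bool × ((Fin d → ℝ) × (Fin d → ℝ))) =>
      ENNReal.ofReal (lqNorm q ((if p.2.1 then p.1 else p.2.2.1) - p.1)) :=
    ((continuous_lqNorm hq0).measurable.comp (hsel.sub measurable_fst)).ennreal_ofReal
  have hHmeas1 : Measurable fun z : Fin d → ℝ => ENNReal.ofReal (lqNorm q z) :=
    (continuous_lqNorm hq0).measurable.ennreal_ofReal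
  -- pointwise bound
  have hpt : ∀ p : (Fin d → ℝ) × (Bool × ((Fin d → ℝ) × (Fin d → ℝ))),
      ENNReal.ofReal (lqNorm q (((if p.2.1 then p.1 else p.2.2.1) + p.2.2.2) - p.1)) ≤
        ENNReal.ofReal (lqNorm q ((if p.2.1 then p.1 else p.2.2.1) - p.1)) +
          ENNReal.ofReal (lqNorm q p.2.2.2) := by
    intro p
    have h1 : ((if p.2.1 then p.1 else p.2.2.1) + p.2.2.2) - p.1
        = ((if p.2.1 then p.1 else p.2.2.1) - p.1) + p.2.2.2 := by abel
    calc ENNReal.ofReal (lqNorm q (((if p.2.1 then p.1 else p.2.2.1) + p.2.2.2) - p.1))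
        ≤ ENNReal.ofReal (lqNorm q ((if p.2.1 then p.1 else p.2.2.1) - p.1) +
            lqNorm q p.2.2.2) := by
          apply ENNReal.ofReal_le_ofReal
          rw [h1]
          exact lqNorm_add_le hq _ _
      _ ≤ _ := ENNReal.ofReal_add_le
  -- part 2 : noise term
  have hH : ∫⁻ p, ENNReal.ofReal (lqNorm q p.2.2.2)
        ∂(μ.prod ((bern (1 - ω)).prod ((unifOn Θ).prod (laplacePi d b))))
      ≤ ENNReal.ofReal ((d:ℝ) ^ (1/q) * (b*q)) := by
    have e1 := lint_snd (h := fun w : Bool × ((Fin d → ℝ) × (Fin d → ℝ)) =>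
        ENNReal.ofReal (lqNorm q w.2.2)) μ
      ((bern (1 - ω)).prod ((unifOn Θ).prod (laplacePi d b)))
      (hHmeas1.comp (measurable_snd.comp measurable_snd))
    have e2 := lint_snd (h := fun v : (Fin d → ℝ) × (Fin d → ℝ) =>
        ENNReal.ofReal (lqNorm q v.2)) (bern (1 - ω)) ((unifOn Θ).prod (laplacePi d b))
      (hHmeas1.comp measurable_snd)
    have e3 := lint_snd (h := fun z : Fin d → ℝ => ENNReal.ofReal (lqNorm q z))
      (unifOn Θ) (laplacePi d b) hHmeas1
    calc ∫⁻ p, ENNReal.ofReal (lqNorm q p.2.2.2)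
          ∂(μ.prod ((bern (1 - ω)).prod ((unifOn Θ).prod (laplacePi d b))))
        = ∫⁻ w, ENNReal.ofReal (lqNorm q w.2.2)
            ∂((bern (1 - ω)).prod ((unifOn Θ).prod (laplacePi d b))) := e1
      _ = ∫⁻ v, ENNReal.ofReal (lqNorm q v.2) ∂((unifOn Θ).prod (laplacePi d b)) := e2
      _ = ∫⁻ z, ENNReal.ofReal (lqNorm q z) ∂(laplacePi d b) := e3
      _ ≤ ENNReal.ofReal ((d:ℝ) ^ (1/q) * (b*q)) := laplacePi_norm_bound hb0 hq
  -- part 1 : coin term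
  have hG : ∫⁻ p, ENNReal.ofReal (lqNorm q ((if p.2.1 then p.1 else p.2.2.1) - p.1))
        ∂(μ.prod ((bern (1 - ω)).prod ((unifOn Θ).prod (laplacePi d b))))
      ≤ ENNReal.ofReal (ω * R) := by
    rw [MeasureTheory.lintegral_prod _ hGmeas.aemeasurable]
    have haeΘ : ∀ᵐ a ∂μ, a ∈ Θ := by
      rw [MeasureTheory.ae_iff]
      exact hμsupp
    calc ∫⁻ a, (∫⁻ w, ENNReal.ofReal
          (lqNorm q ((if w.1 then a else w.2.1) - a))
          ∂((bern (1 - ω)).prod ((unifOn Θ).prod (laplacePi d b)))) ∂μ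
        ≤ ∫⁻ _, ENNReal.ofReal (ω * R) ∂μ := by
          apply lintegral_mono_ae
          filter_upwards [haeΘ] with a haΘ
          have hinner : ∫⁻ w, ENNReal.ofReal (lqNorm q ((if w.1 then a else w.2.1) - a))
              ∂((bern (1 - ω)).prod ((unifOn Θ).prod (laplacePi d b)))
              = ∫⁻ coin, (∫⁻ v, ENNReal.ofReal (lqNorm q ((if coin then a else v.1) - a))
                  ∂((unifOn Θ).prod (laplacePi d b))) ∂(bern (1 - ω)) := by
            apply MeasureTheory.lintegral_prod
            apply Measurable.aemeasurable
            apply Measurable.ennreal_ofReal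
            apply (continuous_lqNorm hq0).measurable.comp
            apply Measurable.sub _ measurable_const
            exact Measurable.ite ((measurable_fst) (measurableSet_singleton true))
              measurable_const (measurable_fst.comp measurable_snd)
          rw [hinner, lint_bern]
          have htrue : (∫⁻ v, ENNReal.ofReal (lqNorm q ((if true then a else v.1) - a))
              ∂((unifOn Θ).prod (laplacePi d b))) = 0 := by
            have hv : ∀ v : (Fin d → ℝ) × (Fin d → ℝ),
                ENNReal.ofReal (lqNorm q ((if true then a else v.1) - a)) = 0 := by
              intro v
              rw [if_pos rfl, sub_self, lqNorm_zero hq0, ENNReal.ofReal_zero]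
            rw [lintegral_congr hv, lintegral_zero]
          have hfalse : (∫⁻ v, ENNReal.ofReal (lqNorm q ((if false then a else v.1) - a))
              ∂((unifOn Θ).prod (laplacePi d b))) ≤ ENNReal.ofReal R := by
            have hv : ∀ v : (Fin d → ℝ) × (Fin d → ℝ),
                ENNReal.ofReal (lqNorm q ((if false then a else v.1) - a))
                  = ENNReal.ofReal (lqNorm q (v.1 - a)) := by
              intro v
              rw [if_neg (by simp)]
            rw [lintegral_congr hv]
            have e4 := lint_fst (h := fun u : Fin d → ℝ => ENNReal.ofReal (lqNorm q (u - a)))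
              (unifOn Θ) (laplacePi d b)
              (((continuous_lqNorm hq0).measurable.comp
                (measurable_id.sub measurable_const)).ennreal_ofReal)
            rw [e4]
            rw [unifOn, lintegral_smul_measure]
            have hle : ∫⁻ u, ENNReal.ofReal (lqNorm q (u - a)) ∂(volume.restrict Θ)
                ≤ ENNReal.ofReal R * volume Θ := by
              calc ∫⁻ u, ENNReal.ofReal (lqNorm q (u - a)) ∂(volume.restrict Θ)
                  ≤ ∫⁻ _, ENNReal.ofReal R ∂(volume.restrict Θ) := by
                    apply lintegral_mono_ae
                    filter_upwards [ae_restrict_mem hΘmeas] with u huΘ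
                    apply ENNReal.ofReal_le_ofReal
                    have := lqNorm_sub_le_of_mem hq (hΘ ▸ haΘ) (hΘ ▸ huΘ)
                    calc lqNorm q (u - a) ≤ 2 * (R/2) := this
                      _ = R := by ring
                _ = ENNReal.ofReal R * volume Θ := by
                    rw [lintegral_const, Measure.restrict_apply_univ]
            calc (volume Θ)⁻¹ * ∫⁻ u, ENNReal.ofReal (lqNorm q (u - a)) ∂(volume.restrict Θ)
                ≤ (volume Θ)⁻¹ * (ENNReal.ofReal R * volume Θ) :=
                  mul_le_mul_right hle _
              _ = ENNReal.ofReal R * ((volume Θ)⁻¹ * volume Θ) := by ring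
              _ = ENNReal.ofReal R := by
                  rw [ENNReal.inv_mul_cancel hvolΘ0 hvolΘt, mul_one]
          calc ENNReal.ofReal (1-ω) * (∫⁻ v, ENNReal.ofReal
                (lqNorm q ((if true then a else v.1) - a)) ∂((unifOn Θ).prod (laplacePi d b)))
              + ENNReal.ofReal (1-(1-ω)) * (∫⁻ v, ENNReal.ofReal
                (lqNorm q ((if false then a else v.1) - a)) ∂((unifOn Θ).prod (laplacePi d b)))
              ≤ ENNReal.ofReal (1-ω) * 0 + ENNReal.ofReal (1-(1-ω)) * ENNReal.ofReal R := by
                exact add_le_add (by rw [htrue]) (mul_le_mul_right hfalse _)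
            _ = ENNReal.ofReal (ω * R) := by
                rw [mul_zero, zero_add, show (1:ℝ)-(1-ω) = ω by ring,
                  ← ENNReal.ofReal_mul hω0.le]
      _ = ENNReal.ofReal (ω * R) := by rw [lintegral_const, measure_univ, mul_one]
  -- final numeric identity
  have hbval : (d:ℝ) ^ (1/q) * (b*q) = 4 * R * (d:ℝ) * q / ε' * t := by
    have hdd : (d:ℝ) ^ (1/q) * (d:ℝ) ^ (1 - 1/q) = (d:ℝ) := by
      rw [← Real.rpow_add hdR, show 1/q + (1 - 1/q) = 1 by ring, Real.rpow_one]
    rw [hb, hΔ]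
    calc (d:ℝ) ^ (1/q) * (2 * (2 * (d:ℝ) ^ (1 - 1/q) * R * t) / ε' * q)
        = ((d:ℝ) ^ (1/q) * (d:ℝ) ^ (1 - 1/q)) * (4 * R * t * q / ε') := by ring
      _ = 4 * R * (d:ℝ) * q / ε' * t := by rw [hdd]; ring
  -- assembling
  have hRHS0 : (0:ℝ) ≤ ω * R + 4 * R * (d:ℝ) * q / ε' * t := by positivity
  rw [MeasureTheory.integral_eq_lintegral_of_nonneg_ae
    (Filter.Eventually.of_forall fun p => lqNorm_nonneg _) hFmeas.aestronglyMeasurable]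
  apply ENNReal.toReal_le_of_le_ofReal hRHS0
  calc ∫⁻ p, ENNReal.ofReal (lqNorm q (((if p.2.1 then p.1 else p.2.2.1) + p.2.2.2) - p.1))
        ∂(μ.prod ((bern (1 - ω)).prod ((unifOn Θ).prod (laplacePi d b))))
      ≤ ∫⁻ p, (ENNReal.ofReal (lqNorm q ((if p.2.1 then p.1 else p.2.2.1) - p.1)) +
          ENNReal.ofReal (lqNorm q p.2.2.2))
        ∂(μ.prod ((bern (1 - ω)).prod ((unifOn Θ).prod (laplacePi d b)))) :=
        lintegral_mono hpt
    _ = (∫⁻ p, ENNReal.ofReal (lqNorm q ((if p.2.1 then p.1 else p.2.2.1) - p.1))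
          ∂(μ.prod ((bern (1 - ω)).prod ((unifOn Θ).prod (laplacePi d b))))) +
        (∫⁻ p, ENNReal.ofReal (lqNorm q p.2.2.2)
          ∂(μ.prod ((bern (1 - ω)).prod ((unifOn Θ).prod (laplacePi d b))))) :=
        lintegral_add_left hGmeas _
    _ ≤ ENNReal.ofReal (ω * R) + ENNReal.ofReal ((d:ℝ) ^ (1/q) * (b*q)) := add_le_add hG hH
    _ = ENNReal.ofReal (ω * R + 4 * R * (d:ℝ) * q / ε' * t) := by
        rw [hbval, ← ENNReal.ofReal_add (by positivity) (by positivity)]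

end Aux

end
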